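/- Fix q ∈ ℂ with 0 < |q| < 1 and set ζ := q/conj(q). On ℓ²(ℤ⁴) with standard orthonormal basis (e_{i,j,k,l}), let 𝔅 be the unitary determined by 𝔅 e_{i,j,k,l} = ζ^{−jl} e_{k,l,i,j}. Define linear operators on the dense subspace of finitely supported vectors: N₀ e_{i,j,k,l} = q^i e_{i,j+1,k,l}, M₀ e_{i,j,k,l} = ζ^{−j} q^k e_{i,j,k,l+1}, N₁ e_{i,j,k,l} = q^i e_{i−1,j+1,k,l}, and M₁ e_{i,j,k,l} = ζ^{−j} q^k e_{i,j,k−1,l+1}. Then for every finitely supported vector ξ: 𝔅(N₀(𝔅⁻¹ξ)) = M₀ξ and 𝔅(N₁(𝔅⁻¹ξ)) = M₁ξ; that is, 𝔅(n⊗1)𝔅* = P⊗n and 𝔅(vn⊗1)𝔅* = P⊗vn. -/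

import Mathlib

/-!
STATEMENT 10: For q ∈ ℂ with 0 < |q| < 1 and ζ := q/conj(q), on ℓ²(ℤ⁴) the braiding
unitary 𝔅 e_{i,j,k,l} = ζ^{−jl} e_{k,l,i,j} satisfies, on finitely supported vectors,
𝔅(n⊗1)𝔅* = P⊗n and 𝔅(vn⊗1)𝔅* = P⊗vn, where
(n⊗1) e_{i,j,k,l} = q^i e_{i,j+1,k,l}, (P⊗n) e_{i,j,k,l} = ζ^{−j} q^k e_{i,j,k,l+1},
(vn⊗1) e_{i,j,k,l} = q^i e_{i−1,j+1,k,l}, (P⊗vn) e_{i,j,k,l} = ζ^{−j} q^k e_{i,j,k−1,l+1}.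
-/

noncomputable section

/-- The Hilbert space ℓ²(ℤ⁴). -/
abbrev H : Type := lp (fun _ : ℤ × ℤ × ℤ × ℤ => ℂ) 2

/-- The dense subspace of finitely supported vectors in ℓ²(ℤ⁴). -/
abbrev F : Type := (ℤ × ℤ × ℤ × ℤ) →₀ ℂ

/-- The standard orthonormal basis vector of ℓ²(ℤ⁴). -/
noncomputable def e (i j k l : ℤ) : H := lp.single 2 (i, j, k, l) 1

/-- The standard basis vector of the finitely supported subspace. -/
noncomputable def δ (i j k l : ℤ) : F := Finsupp.single (i, j, k, l) 1

theorem braiding_conjugates_n_and_vn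
    (q : ℂ) (hq0 : 0 < ‖q‖) (hq1 : ‖q‖ < 1)
    (ζ : ℂ) (hζ : ζ = q / (starRingEnd ℂ) q)
    -- the braiding unitary 𝔅 on ℓ²(ℤ⁴)
    (B : H ≃ₗᵢ[ℂ] H)
    (hB : ∀ i j k l : ℤ, B (e i j k l) = ζ ^ (-(j * l)) • e k l i j)
    -- its restriction to finitely supported vectors (so Bf.symm is 𝔅⁻¹)
    (Bf : F ≃ₗ[ℂ] F)
    (hBf : ∀ i j k l : ℤ, Bf (δ i j k l) = ζ ^ (-(j * l)) • δ k l i j)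
    -- the operators n⊗1, vn⊗1, P⊗n, P⊗vn on finitely supported vectors
    (N0 N1 M0 M1 : F →ₗ[ℂ] H)
    (hN0 : ∀ i j k l : ℤ, N0 (δ i j k l) = q ^ i • e i (j + 1) k l)
    (hM0 : ∀ i j k l : ℤ, M0 (δ i j k l) = (ζ ^ (-j) * q ^ k) • e i j k (l + 1))
    (hN1 : ∀ i j k l : ℤ, N1 (δ i j k l) = q ^ i • e (i - 1) (j + 1) k l)
    (hM1 : ∀ i j k l : ℤ, M1 (δ i j k l) = (ζ ^ (-j) * q ^ k) • e i j (k - 1) (l + 1)) :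
    ∀ ξ : F, B (N0 (Bf.symm ξ)) = M0 ξ ∧ B (N1 (Bf.symm ξ)) = M1 ξ := by
  have hq : q ≠ 0 := by
    intro h; rw [h] at hq0; simp at hq0
  have hζ0 : ζ ≠ 0 := by
    rw [hζ]
    exact div_ne_zero hq (by simpa using hq)
  have hsymm : ∀ i j k l : ℤ, Bf.symm (δ i j k l) = ζ ^ (l * j) • δ k l i j := by
    intro i j k l
    apply Bf.injective
    rw [Bf.apply_symm_apply, map_smul, hBf, smul_smul, ← zpow_add₀ hζ0]
    simp
  have hsc : ∀ j l : ℤ, ζ ^ (l * j) * ζ ^ (-((l + 1) * j)) = ζ ^ (-j) := by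
    intro j l
    rw [← zpow_add₀ hζ0]
    congr 1
    ring
  intro ξ
  constructor
  · induction ξ using Finsupp.induction_linear with
    | zero => simp
    | add f g hf hg => simp only [map_add, hf, hg]
    | single a b =>
      obtain ⟨i, j, k, l⟩ := a
      have : (Finsupp.single (i, j, k, l) b : F) = b • δ i j k l := by
        simp [δ, Finsupp.smul_single]
      rw [this, map_smul, map_smul, map_smul, hsymm, map_smul, hN0, map_smul, map_smul, hB,
        map_smul, hM0]
      simp only [smul_smul]
      congr 1
      rw [← hsc j l]
      ring
  · induction ξ using Finsupp.induction_linear with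
    | zero => simp
    | add f g hf hg => simp only [map_add, hf, hg]
    | single a b =>
      obtain ⟨i, j, k, l⟩ := a
      have : (Finsupp.single (i, j, k, l) b : F) = b • δ i j k l := by
        simp [δ, Finsupp.smul_single]
      rw [this, map_smul, map_smul, map_smul, hsymm, map_smul, hN1, map_smul, map_smul, hB,
        map_smul, hM1]
      simp only [smul_smul]
      congr 1
      rw [← hsc j l]
      ring
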